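/- Let G be a second countable locally compact group, π a unitary representation of G on a separable complex Hilbert space H, and c ∈ Z¹(G,π) an almost coboundary. Then there exists an adapted probability measure μ on G such that c ∈ Z¹_μ(G,π) and c belongs to the closure of B¹(G,π) inside Z¹_μ(G,π) for the L²(G,μ;H)-norm. -/

import Mathlib

noncomputable section

open MeasureTheory Filter Topology Pointwise

namespace Evan

variable {𝕜 : Type} [RCLike 𝕜]
variable {G : Type} [Group G] [TopologicalSpace G] [IsTopologicalGroup G]
variable {H : Type} [NormedAddCommGroup H] [InnerProductSpace 𝕜 H] [CompleteSpace H]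

/-- A continuous unitary (orthogonal, when `𝕜 = ℝ`) representation of `G` on `H`:
a homomorphism into the unitary group which is continuous for the topology
of pointwise norm convergence. -/
structure IsUnitaryRep (π : G →* (H →L[𝕜] H)) : Prop where
  mem_unitary : ∀ g, π g ∈ unitary (H →L[𝕜] H)
  cont : ∀ ξ : H, Continuous fun g => π g ξ

/-- The commutant `π(G)'` of a representation. -/
def commutant (π : G →* (H →L[𝕜] H)) : Set (H →L[𝕜] H) :=
  {T | ∀ g, T * π g = π g * T}

/-- The bicommutant `π(G)''`, i.e. the von Neumann algebra generated by `π(G)`. -/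
def bicommutant (π : G →* (H →L[𝕜] H)) : Set (H →L[𝕜] H) :=
  Set.centralizer (commutant π)

/-- Closure of a set of operators in the weak operator topology. -/
def wotClosure (𝕜 : Type) {H : Type} [RCLike 𝕜] [NormedAddCommGroup H]
    [InnerProductSpace 𝕜 H] (S : Set (H →L[𝕜] H)) : Set (H →L[𝕜] H) :=
  (ContinuousLinearMapWOT.ofCLM : (H →L[𝕜] H) → (H →WOT[𝕜] H)) ⁻¹' closure ((ContinuousLinearMapWOT.ofCLM : (H →L[𝕜] H) → (H →WOT[𝕜] H)) '' S)

/-- A continuous `1`-cocycle for the representation `π`. -/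
def IsCocycle (π : G →* (H →L[𝕜] H)) (c : G → H) : Prop :=
  Continuous c ∧ ∀ g h : G, c (g * h) = c g + π g (c h)

/-- A coboundary: `c g = ξ - π g ξ` for some `ξ`. -/
def IsCoboundary (π : G →* (H →L[𝕜] H)) (c : G → H) : Prop :=
  ∃ ξ : H, ∀ g : G, c g = ξ - π g ξ

/-- `c` is an almost coboundary: it lies in the closure of the set of coboundaries for
the topology of uniform convergence on compact subsets of `G`. -/
def IsAlmostCoboundary (π : G →* (H →L[𝕜] H)) (c : G → H) : Prop :=
  ∀ Q : Set G, IsCompact Q → ∀ ε : ℝ, 0 < ε → ∃ ξ : H, ∀ g ∈ Q, ‖c g - (ξ - π g ξ)‖ ≤ ε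

/-- The reduction ideal `I(c) = {T ∈ π(G)' : T·c ∈ B¹(G,π)}`. -/
def reductionIdeal (π : G →* (H →L[𝕜] H)) (c : G → H) : Set (H →L[𝕜] H) :=
  {T | T ∈ commutant π ∧ IsCoboundary π fun g => T (c g)}

/-- `c` is evanescent: `I(c)` is dense in `π(G)'` for the weak operator topology. -/
def IsEvanescent (π : G →* (H →L[𝕜] H)) (c : G → H) : Prop :=
  commutant π ⊆ wotClosure 𝕜 (reductionIdeal π c)

/-- `c` is irreducible: `I(c) = {0}`. -/
def IsIrreducibleCocycle (π : G →* (H →L[𝕜] H)) (c : G → H) : Prop :=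
  reductionIdeal π c = {0}

/-- `π` has almost invariant vectors. -/
def HasAlmostInvariantVectors (π : G →* (H →L[𝕜] H)) : Prop :=
  ∀ Q : Set G, IsCompact Q → ∀ ε : ℝ, 0 < ε →
    ∃ ξ : H, ‖ξ‖ = 1 ∧ ∀ g ∈ Q, ‖π g ξ - ξ‖ ≤ ε

/-- `π` is irreducible: the only closed invariant subspaces are `⊥` and `⊤`. -/
def IsIrreducibleRep (π : G →* (H →L[𝕜] H)) : Prop :=
  ∀ K : Submodule 𝕜 H, IsClosed (K : Set H) → (∀ g : G, ∀ x ∈ K, π g x ∈ K) →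
    K = ⊥ ∨ K = ⊤

/-- A projection: a self-adjoint idempotent. -/
def IsProjection (p : H →L[𝕜] H) : Prop :=
  IsSelfAdjoint p ∧ p * p = p

/-- The reduction ideal of the projected cocycle `p·c`, viewed as a cocycle for the
subrepresentation of `π` on `pH`, whose commutant is identified with the corner
`p π(G)' p` (a von Neumann algebra with unit `p`). -/
def projReductionIdeal (π : G →* (H →L[𝕜] H)) (c : G → H) (p : H →L[𝕜] H) :
    Set (H →L[𝕜] H) :=
  {T | T ∈ commutant π ∧ p * T = T ∧ T * p = T ∧
    ∃ ξ : H, p ξ = ξ ∧ ∀ g : G, T (c g) = ξ - π g ξ}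

/-- The projected cocycle `p·c` is evanescent: its reduction ideal is dense, in the weak
operator topology, in the commutant of the subrepresentation on `pH` (the corner
`p π(G)' p`). -/
def ProjIsEvanescent (π : G →* (H →L[𝕜] H)) (c : G → H) (p : H →L[𝕜] H) : Prop :=
  {T | T ∈ commutant π ∧ p * T = T ∧ T * p = T} ⊆
    wotClosure 𝕜 (projReductionIdeal π c p)

/-- The projected cocycle `p·c` is irreducible: its reduction ideal is `{0}`. -/
def ProjIsIrreducible (π : G →* (H →L[𝕜] H)) (c : G → H) (p : H →L[𝕜] H) : Prop :=
  projReductionIdeal π c p = {0}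

/-- `G` is weak identity excluding (WIE): every irreducible unitary representation of `G`
on a separable complex Hilbert space that has almost invariant vectors is trivial. -/
def IsWIE (G : Type) [Group G] [TopologicalSpace G] [IsTopologicalGroup G] : Prop :=
  ∀ (H : Type) (_ : NormedAddCommGroup H) (_ : InnerProductSpace ℂ H)
    (_ : CompleteSpace H) (_ : TopologicalSpace.SeparableSpace H)
    (π : G →* (H →L[ℂ] H)), IsUnitaryRep π → IsIrreducibleRep π →
      HasAlmostInvariantVectors π → ∀ g : G, π g = 1

/-- The support of a measure on a topological space: the set of points all of whose
open neighbourhoods have positive measure. -/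
def measSupport {G : Type} [TopologicalSpace G] [MeasurableSpace G] (μ : Measure G) :
    Set G :=
  {g | ∀ U : Set G, IsOpen U → g ∈ U → 0 < μ U}

/-- An adapted probability measure on `G`: symmetric, absolutely continuous with respect
to the Haar measure, and whose support generates `G`. -/
structure IsAdapted {G : Type} [Group G] [TopologicalSpace G] [IsTopologicalGroup G]
    [LocallyCompactSpace G] [MeasurableSpace G] [BorelSpace G] (μ : Measure G) :
    Prop where
  prob : IsProbabilityMeasure μ
  symmetric : μ.inv = μ
  absCont : μ ≪ MeasureTheory.Measure.haar
  generates : Subgroup.closure (measSupport μ) = ⊤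

/-- The word-length function associated to a generating set `S`. -/
def wordLength {G : Type} [Group G] (S : Set G) (g : G) : ℕ :=
  sInf {n : ℕ | g ∈ (S ∪ S⁻¹ ∪ {1}) ^ n}

/-- `μ` has a second moment with respect to some compact generating set of `G`. -/
def HasSecondMoment {G : Type} [Group G] [TopologicalSpace G] [MeasurableSpace G]
    (μ : Measure G) : Prop :=
  ∃ S : Set G, IsCompact S ∧ Subgroup.closure S = ⊤ ∧
    Integrable (fun g => (wordLength S g : ℝ) ^ 2) μ

open scoped ENNReal NNReal

/-- Every almost coboundary lies in the `L²(μ)`-closure of the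
coboundaries for some adapted probability measure `μ`. -/
theorem almostCoboundary_L2_approximation
    (G : Type) [Group G] [TopologicalSpace G] [IsTopologicalGroup G]
    [LocallyCompactSpace G] [SecondCountableTopology G]
    [MeasurableSpace G] [BorelSpace G]
    (H : Type) [NormedAddCommGroup H] [InnerProductSpace ℂ H] [CompleteSpace H]
    [TopologicalSpace.SeparableSpace H]
    (π : G →* (H →L[ℂ] H)) (hπ : IsUnitaryRep π)
    (c : G → H) (hc : IsCocycle π c) (hac : IsAlmostCoboundary π c) :
    ∃ μ : Measure G, IsAdapted μ ∧ MemLp c 2 μ ∧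
      ∀ ε : ℝ, 0 < ε → ∃ ξ : H, (∫ g, ‖c g - (ξ - π g ξ)‖ ^ 2 ∂μ) < ε ^ 2 := by
  classical
  set μH : Measure G := MeasureTheory.Measure.haar with hμHdef
  -- norms are preserved by the representation
  have hπnorm : ∀ (g : G) (v : H), ‖π g v‖ = ‖v‖ := by
    intro g v
    have h := (Unitary.mem_iff.mp (hπ.mem_unitary g)).1
    rw [ContinuousLinearMap.star_eq_adjoint] at h
    have h2 : (ContinuousLinearMap.adjoint (π g)) ((π g) v) = v := by
      have := congrArg (fun T : H →L[ℂ] H => T v) h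
      simpa [ContinuousLinearMap.mul_apply] using this
    have h3 : (inner ℂ ((π g) v) ((π g) v) : ℂ) = inner ℂ v v := by
      rw [← ContinuousLinearMap.adjoint_inner_left, h2]
    have h4 : ‖(π g) v‖ ^ 2 = ‖v‖ ^ 2 := by
      have := congrArg RCLike.re h3
      rwa [inner_self_eq_norm_sq, inner_self_eq_norm_sq] at this
    rw [← Real.sqrt_sq (norm_nonneg ((π g) v)), ← Real.sqrt_sq (norm_nonneg v), h4]
  -- an exhaustion by open sets with compact closures
  obtain ⟨C0, hC0cpt, hC0mem⟩ := exists_compact_mem_nhds (1 : G)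
  let K : CompactExhaustion G := CompactExhaustion.choice G
  set U : ℕ → Set G := fun n => interior (K (n + 1)) ∪ interior C0 with hUdef
  have hUopen : ∀ n, IsOpen (U n) := fun n => isOpen_interior.union isOpen_interior
  have hUmem : ∀ n, (1 : G) ∈ U n := fun n => Or.inr (mem_interior_iff_mem_nhds.2 hC0mem)
  have hUmono : ∀ {m n : ℕ}, m ≤ n → U m ⊆ U n := by
    intro m n hmn
    exact Set.union_subset_union_left _ (interior_mono (K.subset (by omega)))
  have hUcover : ∀ g : G, ∃ n, g ∈ U n := by
    intro g
    obtain ⟨n, hn⟩ := K.exists_mem g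
    exact ⟨n, Or.inl (K.subset_interior_succ n hn)⟩
  set Q : ℕ → Set G := fun n => closure (U n) ∪ (closure (U n))⁻¹ with hQdef
  have hQcl : ∀ n, IsCompact (closure (U n)) := by
    intro n
    have h1 : IsCompact (closure ((K (n + 1) : Set G) ∪ C0)) :=
      ((K.isCompact _).union hC0cpt).closure
    exact h1.of_isClosed_subset isClosed_closure
      (closure_mono (Set.union_subset_union interior_subset interior_subset))
  have hQcpt : ∀ n, IsCompact (Q n) := fun n => (hQcl n).union (hQcl n).inv
  have hUQ : ∀ n, U n ⊆ Q n := fun n =>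
    subset_closure.trans Set.subset_union_left
  have hQinv : ∀ n, ∀ g ∈ U n, g⁻¹ ∈ Q n := fun n g hg =>
    Or.inr (Set.inv_mem_inv.2 (subset_closure hg))
  have hQmono : ∀ {m n : ℕ}, m ≤ n → Q m ⊆ Q n := by
    intro m n hmn
    exact Set.union_subset_union (closure_mono (hUmono hmn))
      (Set.inv_subset_inv.2 (closure_mono (hUmono hmn)))
  -- almost-coboundary witnesses
  have hξex : ∀ n : ℕ, ∃ ξ : H, ∀ g ∈ Q n, ‖c g - (ξ - π g ξ)‖ ≤ (1/2 : ℝ) ^ n :=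
    fun n => hac (Q n) (hQcpt n) _ (by positivity)
  choose ξ hξ using hξex
  -- bounds for ‖c‖ on the compacts
  have hMex : ∀ n : ℕ, ∃ Mn : ℝ, 0 ≤ Mn ∧ ∀ g ∈ Q n, ‖c g‖ ≤ Mn := by
    intro n
    obtain ⟨B, hB⟩ := (hQcpt n).exists_bound_of_continuousOn hc.1.continuousOn
    exact ⟨max B 0, le_max_right _ _, fun g hg => (hB g hg).trans (le_max_left _ _)⟩
  choose M hM0 hM using hMex
  set Ξ : ℕ → ℝ := fun n => ∑ i ∈ Finset.range (n + 1), ‖ξ i‖ with hΞdef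
  have hΞ0 : ∀ n, 0 ≤ Ξ n := fun n => Finset.sum_nonneg fun i _ => norm_nonneg _
  have hΞ : ∀ {m n : ℕ}, m ≤ n → ‖ξ m‖ ≤ Ξ n := fun {m n} h =>
    Finset.single_le_sum (fun i _ => norm_nonneg _) (Finset.mem_range.2 (by omega))
  -- the weights
  set a : ℕ → ℝ := fun n => (1/2 : ℝ) ^ n / (1 + (M n + 2 * Ξ n) ^ 2) with hadef
  have hDpos : ∀ n, (0:ℝ) < 1 + (M n + 2 * Ξ n) ^ 2 := fun n => by positivity
  have ha_pos : ∀ n, 0 < a n := fun n => div_pos (by positivity) (hDpos n)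
  have ha_key : ∀ (n : ℕ) (X : ℝ), 0 ≤ X → X ≤ M n + 2 * Ξ n →
      a n * X ^ 2 ≤ (1/2 : ℝ) ^ n := by
    intro n X hX0 hXle
    have h1 : X ^ 2 ≤ 1 + (M n + 2 * Ξ n) ^ 2 := by nlinarith
    calc a n * X ^ 2 ≤ a n * (1 + (M n + 2 * Ξ n) ^ 2) :=
          mul_le_mul_of_nonneg_left h1 (ha_pos n).le
      _ = (1/2 : ℝ) ^ n := div_mul_cancel₀ _ (hDpos n).ne'
  have ha_le : ∀ n, a n ≤ (1/2 : ℝ) ^ n := fun n =>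
    div_le_self (by positivity) (le_add_of_nonneg_right (sq_nonneg _))
  -- the measures
  have hUpos : ∀ n, 0 < μH (U n) := fun n => (hUopen n).measure_pos μH ⟨1, hUmem n⟩
  have hUfin : ∀ n, μH (U n) < ∞ :=
    fun n => lt_of_le_of_lt (measure_mono (hUQ n)) (hQcpt n).measure_lt_top
  set ν : ℕ → Measure G := fun n => (μH (U n))⁻¹ • μH.restrict (U n) with hνdef
  set ρ : ℕ → Measure G := fun n => (2 : ℝ≥0∞)⁻¹ • (ν n + (ν n).inv) with hρdef
  have hν_univ : ∀ n, ν n Set.univ = 1 := by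
    intro n
    simp only [hνdef, Measure.smul_apply, Measure.restrict_apply_univ, smul_eq_mul]
    exact ENNReal.inv_mul_cancel (hUpos n).ne' (hUfin n).ne
  have hρ_univ : ∀ n, ρ n Set.univ = 1 := by
    intro n
    simp only [hρdef, Measure.smul_apply, Measure.add_apply, smul_eq_mul,
      Measure.inv_apply, Set.inv_univ, hν_univ n]
    rw [one_add_one_eq_two, ENNReal.inv_mul_cancel two_ne_zero ENNReal.ofNat_ne_top]
  set A : ℝ≥0∞ := ∑' n, ENNReal.ofReal (a n) with hAdef
  have hgeom : Summable (fun n : ℕ => (1/2 : ℝ) ^ n) :=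
    summable_geometric_of_lt_one (by norm_num) (by norm_num)
  have hA_fin : A < ∞ := by
    have h1 : A ≤ ∑' n : ℕ, ENNReal.ofReal ((1/2 : ℝ) ^ n) :=
      ENNReal.tsum_le_tsum fun n => ENNReal.ofReal_le_ofReal (ha_le n)
    have h2 : ∑' n : ℕ, ENNReal.ofReal ((1/2 : ℝ) ^ n)
        = ENNReal.ofReal (∑' n : ℕ, (1/2 : ℝ) ^ n) :=
      (ENNReal.ofReal_tsum_of_nonneg (fun n => by positivity) hgeom).symm
    exact lt_of_le_of_lt (h1.trans_eq h2) ENNReal.ofReal_lt_top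
  have hA0 : A ≠ 0 :=
    (lt_of_lt_of_le (ENNReal.ofReal_pos.2 (ha_pos 0)) (ENNReal.le_tsum 0)).ne'
  set μ : Measure G := A⁻¹ • Measure.sum (fun n => ENNReal.ofReal (a n) • ρ n) with hμdef
  -- basic formulas
  have hμapp : ∀ s : Set G, MeasurableSet s →
      μ s = A⁻¹ * ∑' n, ENNReal.ofReal (a n) * ρ n s := by
    intro s hs
    rw [hμdef, Measure.smul_apply, Measure.sum_apply _ hs, smul_eq_mul]
    simp_rw [Measure.smul_apply, smul_eq_mul]
  have hlin : ∀ f : G → ℝ≥0∞,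
      ∫⁻ g, f g ∂μ = A⁻¹ * ∑' n, ENNReal.ofReal (a n) * ∫⁻ g, f g ∂(ρ n) := by
    intro f
    rw [hμdef, lintegral_smul_measure, lintegral_sum_measure]
    simp_rw [lintegral_smul_measure, smul_eq_mul]
  have hρ_bound : ∀ (n : ℕ) (f : G → ℝ≥0∞) (B : ℝ≥0∞), Measurable f →
      (∀ g ∈ Q n, f g ≤ B) → ∫⁻ g, f g ∂(ρ n) ≤ B := by
    intro n f B hf hB
    have hν_le : ∫⁻ g, f g ∂(ν n) ≤ B := by
      simp only [hνdef]
      rw [lintegral_smul_measure]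
      have h1 : ∫⁻ g in U n, f g ∂μH ≤ B * μH (U n) := by
        calc ∫⁻ g in U n, f g ∂μH ≤ ∫⁻ _ in U n, B ∂μH :=
              setLIntegral_mono measurable_const (fun g hg => hB g (hUQ n hg))
          _ = B * μH (U n) := setLIntegral_const _ _
      calc (μH (U n))⁻¹ * ∫⁻ g in U n, f g ∂μH
          ≤ (μH (U n))⁻¹ * (B * μH (U n)) := mul_le_mul_right h1 _
        _ = B * ((μH (U n))⁻¹ * μH (U n)) := by ring
        _ = B := by rw [ENNReal.inv_mul_cancel (hUpos n).ne' (hUfin n).ne, mul_one]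
    have hνinv_le : ∫⁻ g, f g ∂(ν n).inv ≤ B := by
      rw [Measure.inv_def, lintegral_map hf measurable_inv]
      simp only [hνdef]
      rw [lintegral_smul_measure]
      have h1 : ∫⁻ g in U n, f g⁻¹ ∂μH ≤ B * μH (U n) := by
        calc ∫⁻ g in U n, f g⁻¹ ∂μH ≤ ∫⁻ _ in U n, B ∂μH :=
              setLIntegral_mono measurable_const (fun g hg => hB g⁻¹ (hQinv n g hg))
          _ = B * μH (U n) := setLIntegral_const _ _
      calc (μH (U n))⁻¹ * ∫⁻ g in U n, f g⁻¹ ∂μH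
          ≤ (μH (U n))⁻¹ * (B * μH (U n)) := mul_le_mul_right h1 _
        _ = B * ((μH (U n))⁻¹ * μH (U n)) := by ring
        _ = B := by rw [ENNReal.inv_mul_cancel (hUpos n).ne' (hUfin n).ne, mul_one]
    calc ∫⁻ g, f g ∂(ρ n)
        = 2⁻¹ * (∫⁻ g, f g ∂(ν n) + ∫⁻ g, f g ∂(ν n).inv) := by
          simp only [hρdef]
          rw [lintegral_smul_measure, lintegral_add_measure, smul_eq_mul]
      _ ≤ 2⁻¹ * (B + B) := mul_le_mul_right (add_le_add hν_le hνinv_le) _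
      _ = B := by
          rw [← two_mul, ← mul_assoc,
            ENNReal.inv_mul_cancel two_ne_zero ENNReal.ofNat_ne_top, one_mul]
  -- the four adaptedness properties
  have hprob : IsProbabilityMeasure μ := by
    constructor
    rw [hμapp _ MeasurableSet.univ]
    have h1 : ∑' n, ENNReal.ofReal (a n) * ρ n Set.univ = A := by
      rw [hAdef]; exact tsum_congr fun n => by rw [hρ_univ n, mul_one]
    rw [h1, ENNReal.inv_mul_cancel hA0 hA_fin.ne]
  have hρinv : ∀ n, (ρ n).inv = ρ n := by
    intro n
    rw [hρdef, Measure.inv_def, Measure.map_smul,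
      Measure.map_add _ _ measurable_inv, ← Measure.inv_def, ← Measure.inv_def,
      Measure.inv_inv, add_comm]
  have hsymm : μ.inv = μ := by
    rw [hμdef, Measure.inv_def, Measure.map_smul,
      Measure.map_sum measurable_inv.aemeasurable]
    refine congrArg _ (congrArg Measure.sum (funext fun n => ?_))
    rw [Measure.map_smul, ← Measure.inv_def, hρinv n]
  have hacont : μ ≪ μH := by
    refine Measure.AbsolutelyContinuous.mk fun s hs h0 => ?_
    rw [hμapp s hs]
    have hρ0 : ∀ n, ρ n s = 0 := by
      intro n
      have hν0 : ν n s = 0 := by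
        rw [hνdef]
        simp only [Measure.smul_apply, smul_eq_mul, Measure.restrict_apply hs]
        rw [measure_mono_null Set.inter_subset_left h0, mul_zero]
      have hνinv0 : (ν n).inv s = 0 := by
        rw [Measure.inv_apply, hνdef]
        simp only [Measure.smul_apply, smul_eq_mul, Measure.restrict_apply hs.inv]
        have h1 : μH s⁻¹ = 0 := by rwa [measure_inv_null]
        rw [measure_mono_null Set.inter_subset_left h1, mul_zero]
      rw [hρdef]
      simp [hν0, hνinv0]
    simp [hρ0]
  have hsupp : measSupport μ = Set.univ := by
    refine Set.eq_univ_of_forall fun g => ?_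
    intro W hWopen hgW
    obtain ⟨n, hgU⟩ := hUcover g
    rw [hμapp W hWopen.measurableSet]
    have hνW : ν n W ≠ 0 := by
      rw [hνdef]
      simp only [Measure.smul_apply, smul_eq_mul, Measure.restrict_apply hWopen.measurableSet]
      exact (ENNReal.mul_pos (ENNReal.inv_ne_zero.2 (hUfin n).ne)
        ((hWopen.inter (hUopen n)).measure_pos μH ⟨g, hgW, hgU⟩).ne').ne'
    have hρW : ρ n W ≠ 0 := by
      rw [hρdef]
      simp only [Measure.smul_apply, Measure.add_apply, smul_eq_mul]
      refine (ENNReal.mul_pos (ENNReal.inv_ne_zero.2 ENNReal.ofNat_ne_top) ?_).ne'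
      exact fun h => hνW (by simpa using (add_eq_zero.mp h).1)
    have hterm : (0 : ℝ≥0∞) < ENNReal.ofReal (a n) * ρ n W :=
      ENNReal.mul_pos (ENNReal.ofReal_pos.2 (ha_pos n)).ne' hρW
    exact ENNReal.mul_pos (ENNReal.inv_ne_zero.2 hA_fin.ne)
      (lt_of_lt_of_le hterm (ENNReal.le_tsum n)).ne'
  -- MemLp
  have hmeas_c2 : Measurable fun g => ENNReal.ofReal (‖c g‖ ^ 2) :=
    (hc.1.norm.pow 2).measurable.ennreal_ofReal
  have hmemlp : MemLp c 2 μ := by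
    refine ⟨hc.1.aestronglyMeasurable, ?_⟩
    rw [eLpNorm_eq_lintegral_rpow_enorm_toReal (by norm_num) (by norm_num)]
    have htw : ((2 : ℝ≥0∞).toReal) = (2 : ℝ) := by norm_num
    have hpt : ∀ g : G, (‖c g‖ₑ) ^ ((2 : ℝ≥0∞).toReal)
        = ENNReal.ofReal (‖c g‖ ^ 2) := by
      intro g
      rw [htw, ← ofReal_norm,
        ENNReal.ofReal_rpow_of_nonneg (norm_nonneg _) (by norm_num)]
      norm_num [Real.rpow_natCast (‖c g‖) 2]
    rw [lintegral_congr hpt]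
    have hle : ∫⁻ g, ENNReal.ofReal (‖c g‖ ^ 2) ∂μ
        ≤ A⁻¹ * ∑' n : ℕ, ENNReal.ofReal ((1/2 : ℝ) ^ n) := by
      rw [hlin _]
      refine mul_le_mul_right (ENNReal.tsum_le_tsum fun n => ?_) _
      have h1 : ∫⁻ g, ENNReal.ofReal (‖c g‖ ^ 2) ∂(ρ n) ≤ ENNReal.ofReal ((M n) ^ 2) :=
        hρ_bound n _ _ hmeas_c2 fun g hg =>
          ENNReal.ofReal_le_ofReal (pow_le_pow_left₀ (norm_nonneg _) (hM n g hg) 2)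
      calc ENNReal.ofReal (a n) * ∫⁻ g, ENNReal.ofReal (‖c g‖ ^ 2) ∂(ρ n)
          ≤ ENNReal.ofReal (a n) * ENNReal.ofReal ((M n) ^ 2) := mul_le_mul_right h1 _
        _ = ENNReal.ofReal (a n * (M n) ^ 2) := (ENNReal.ofReal_mul (ha_pos n).le).symm
        _ ≤ ENNReal.ofReal ((1/2 : ℝ) ^ n) := ENNReal.ofReal_le_ofReal
            (ha_key n (M n) (hM0 n) (le_add_of_nonneg_right (by positivity)))
    have hfin : A⁻¹ * ∑' n : ℕ, ENNReal.ofReal ((1/2 : ℝ) ^ n) < ∞ := by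
      rw [← ENNReal.ofReal_tsum_of_nonneg (fun n => by positivity) hgeom]
      exact ENNReal.mul_lt_top (ENNReal.inv_lt_top.2 (pos_iff_ne_zero.mpr hA0)) ENNReal.ofReal_lt_top
    exact ENNReal.rpow_lt_top_of_nonneg (by norm_num) (lt_of_le_of_lt hle hfin).ne
  refine ⟨μ, ⟨hprob, hsymm, hacont, by rw [hsupp]; exact Subgroup.closure_univ⟩, hmemlp, ?_⟩
  -- the approximation property
  intro ε hε
  obtain ⟨m, hm⟩ : ∃ m : ℕ,
      ((1/2 : ℝ) ^ m) ^ 2 + (a 0)⁻¹ * (2 * (1/2 : ℝ) ^ (m + 1)) < ε ^ 2 := by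
    have t0 : Tendsto (fun m : ℕ => (1/2 : ℝ) ^ m) atTop (𝓝 0) :=
      tendsto_pow_atTop_nhds_zero_of_lt_one (by norm_num) (by norm_num)
    have t1 : Tendsto (fun m : ℕ => ((1/2 : ℝ) ^ m) ^ 2) atTop (𝓝 0) := by
      have := t0.pow 2
      simpa using this
    have t2 : Tendsto (fun m : ℕ => (1/2 : ℝ) ^ (m + 1)) atTop (𝓝 0) :=
      t0.comp (tendsto_add_atTop_nat 1)
    have t3 : Tendsto (fun m : ℕ => ((1/2 : ℝ) ^ m) ^ 2
        + (a 0)⁻¹ * (2 * (1/2 : ℝ) ^ (m + 1))) atTop (𝓝 (0 + (a 0)⁻¹ * (2 * 0))) :=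
      t1.add ((t2.const_mul 2).const_mul _)
    rw [mul_zero, mul_zero, add_zero] at t3
    exact (t3.eventually (gt_mem_nhds (by positivity))).exists
  refine ⟨ξ m, ?_⟩
  have hfcont : Continuous fun g => ‖c g - (ξ m - π g (ξ m))‖ :=
    (hc.1.sub (continuous_const.sub (hπ.cont (ξ m)))).norm
  set F : G → ℝ≥0∞ := fun g => ENNReal.ofReal (‖c g - (ξ m - π g (ξ m))‖ ^ 2) with hFdef
  have hFmeas : Measurable F := (hfcont.pow 2).measurable.ennreal_ofReal
  have hint : (∫ g, ‖c g - (ξ m - π g (ξ m))‖ ^ 2 ∂μ) = (∫⁻ g, F g ∂μ).toReal := by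
    rw [integral_eq_lintegral_of_nonneg_ae (f := fun g => ‖c g - (ξ m - π g (ξ m))‖ ^ 2)
      (Filter.Eventually.of_forall fun g => by positivity)
      (hfcont.pow 2).aestronglyMeasurable]
  -- per term bounds
  have hterm : ∀ n : ℕ, ENNReal.ofReal (a n) * ∫⁻ g, F g ∂(ρ n)
      ≤ ENNReal.ofReal (a n) * ENNReal.ofReal (((1/2 : ℝ) ^ m) ^ 2)
        + (if n ≤ m then 0 else ENNReal.ofReal ((1/2 : ℝ) ^ n)) := by
    intro n
    by_cases hnm : n ≤ m
    · rw [if_pos hnm, add_zero]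
      refine mul_le_mul_right (hρ_bound n _ _ hFmeas fun g hg => ?_) _
      exact ENNReal.ofReal_le_ofReal
        (pow_le_pow_left₀ (norm_nonneg _) (hξ m g (hQmono hnm hg)) 2)
    · rw [if_neg hnm]
      refine le_trans ?_ le_add_self
      have hmn : m ≤ n := by omega
      have h1 : ∫⁻ g, F g ∂(ρ n) ≤ ENNReal.ofReal ((M n + 2 * Ξ n) ^ 2) := by
        refine hρ_bound n _ _ hFmeas fun g hg => ENNReal.ofReal_le_ofReal ?_
        refine pow_le_pow_left₀ (norm_nonneg _) ?_ 2
        have h2 : ‖c g - (ξ m - π g (ξ m))‖ ≤ ‖c g‖ + 2 * ‖ξ m‖ := by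
          have h3 := norm_sub_le (c g) (ξ m - π g (ξ m))
          have h4 := norm_sub_le (ξ m) (π g (ξ m))
          have h5 : ‖π g (ξ m)‖ = ‖ξ m‖ := hπnorm g (ξ m)
          linarith
        have h6 := hM n g hg
        have h7 : ‖ξ m‖ ≤ Ξ n := hΞ hmn
        linarith
      calc ENNReal.ofReal (a n) * ∫⁻ g, F g ∂(ρ n)
          ≤ ENNReal.ofReal (a n) * ENNReal.ofReal ((M n + 2 * Ξ n) ^ 2) :=
            mul_le_mul_right h1 _
        _ = ENNReal.ofReal (a n * (M n + 2 * Ξ n) ^ 2) :=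
            (ENNReal.ofReal_mul (ha_pos n).le).symm
        _ ≤ ENNReal.ofReal ((1/2 : ℝ) ^ n) := ENNReal.ofReal_le_ofReal
            (ha_key n _ (add_nonneg (hM0 n) (by positivity)) le_rfl)
  -- the tail sum
  set Tr : ℕ → ℝ := fun n => if n ≤ m then 0 else (1/2 : ℝ) ^ n with hTrdef
  have hTr0 : ∀ n, 0 ≤ Tr n := by
    intro n; rw [hTrdef]; dsimp only; split <;> positivity
  have hTrsummable : Summable Tr :=
    Summable.of_nonneg_of_le hTr0 (fun n => by
      rw [hTrdef]; dsimp only; split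
      · positivity
      · exact le_rfl) hgeom
  have hTrsum : ∑' n, Tr n ≤ 2 * (1/2 : ℝ) ^ (m + 1) := by
    rw [← Summable.sum_add_tsum_nat_add (m + 1) hTrsummable]
    have h1 : ∑ i ∈ Finset.range (m + 1), Tr i = 0 :=
      Finset.sum_eq_zero fun i hi => if_pos (by
        have := Finset.mem_range.mp hi; omega)
    have h2 : ∀ i : ℕ, Tr (i + (m + 1)) = (1/2 : ℝ) ^ (m + 1) * (1/2 : ℝ) ^ i := by
      intro i
      rw [hTrdef]; dsimp only
      rw [if_neg (by omega), pow_add, mul_comm]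
    rw [h1, zero_add]
    calc ∑' i, Tr (i + (m + 1)) = ∑' i : ℕ, (1/2 : ℝ) ^ (m + 1) * (1/2 : ℝ) ^ i :=
          tsum_congr h2
      _ = (1/2 : ℝ) ^ (m + 1) * ∑' i : ℕ, (1/2 : ℝ) ^ i := tsum_mul_left
      _ = (1/2 : ℝ) ^ (m + 1) * 2 := by
          rw [tsum_geometric_of_lt_one (by norm_num) (by norm_num)]; norm_num
      _ = 2 * (1/2 : ℝ) ^ (m + 1) := mul_comm _ _
      _ ≤ 2 * (1/2 : ℝ) ^ (m + 1) := le_rfl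
  have htail : ∑' n, (if n ≤ m then 0 else ENNReal.ofReal ((1/2 : ℝ) ^ n))
      ≤ ENNReal.ofReal (2 * (1/2 : ℝ) ^ (m + 1)) := by
    have h1 : ∀ n : ℕ, (if n ≤ m then 0 else ENNReal.ofReal ((1/2 : ℝ) ^ n))
        = ENNReal.ofReal (Tr n) := by
      intro n
      rw [hTrdef]; dsimp only; split
      · rw [ENNReal.ofReal_zero]
      · rfl
    calc ∑' n, (if n ≤ m then 0 else ENNReal.ofReal ((1/2 : ℝ) ^ n))
        = ∑' n, ENNReal.ofReal (Tr n) := tsum_congr h1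
      _ = ENNReal.ofReal (∑' n, Tr n) :=
          (ENNReal.ofReal_tsum_of_nonneg hTr0 hTrsummable).symm
      _ ≤ ENNReal.ofReal (2 * (1/2 : ℝ) ^ (m + 1)) := ENNReal.ofReal_le_ofReal hTrsum
  -- assemble the bound
  have hmain : ∫⁻ g, F g ∂μ
      ≤ ENNReal.ofReal (((1/2 : ℝ) ^ m) ^ 2 + (a 0)⁻¹ * (2 * (1/2 : ℝ) ^ (m + 1))) := by
    rw [hlin F]
    have hS : ∑' n, ENNReal.ofReal (a n) * ∫⁻ g, F g ∂(ρ n)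
        ≤ A * ENNReal.ofReal (((1/2 : ℝ) ^ m) ^ 2)
          + ENNReal.ofReal (2 * (1/2 : ℝ) ^ (m + 1)) := by
      calc ∑' n, ENNReal.ofReal (a n) * ∫⁻ g, F g ∂(ρ n)
          ≤ ∑' n, (ENNReal.ofReal (a n) * ENNReal.ofReal (((1/2 : ℝ) ^ m) ^ 2)
            + (if n ≤ m then 0 else ENNReal.ofReal ((1/2 : ℝ) ^ n))) :=
            ENNReal.tsum_le_tsum hterm
        _ = (∑' n, ENNReal.ofReal (a n) * ENNReal.ofReal (((1/2 : ℝ) ^ m) ^ 2))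
            + ∑' n, (if n ≤ m then 0 else ENNReal.ofReal ((1/2 : ℝ) ^ n)) :=
            ENNReal.tsum_add
        _ ≤ A * ENNReal.ofReal (((1/2 : ℝ) ^ m) ^ 2)
            + ENNReal.ofReal (2 * (1/2 : ℝ) ^ (m + 1)) := by
            rw [hAdef, ENNReal.tsum_mul_right]
            exact add_le_add_right htail _
    calc A⁻¹ * ∑' n, ENNReal.ofReal (a n) * ∫⁻ g, F g ∂(ρ n)
        ≤ A⁻¹ * (A * ENNReal.ofReal (((1/2 : ℝ) ^ m) ^ 2)
          + ENNReal.ofReal (2 * (1/2 : ℝ) ^ (m + 1))) := mul_le_mul_right hS _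
      _ = (A⁻¹ * A) * ENNReal.ofReal (((1/2 : ℝ) ^ m) ^ 2)
          + A⁻¹ * ENNReal.ofReal (2 * (1/2 : ℝ) ^ (m + 1)) := by ring
      _ ≤ ENNReal.ofReal (((1/2 : ℝ) ^ m) ^ 2)
          + ENNReal.ofReal ((a 0)⁻¹) * ENNReal.ofReal (2 * (1/2 : ℝ) ^ (m + 1)) := by
          rw [ENNReal.inv_mul_cancel hA0 hA_fin.ne, one_mul]
          refine add_le_add_right (mul_le_mul_left ?_ _) _
          rw [ENNReal.ofReal_inv_of_pos (ha_pos 0)]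
          exact ENNReal.inv_le_inv' (ENNReal.le_tsum 0)
      _ = ENNReal.ofReal (((1/2 : ℝ) ^ m) ^ 2
          + (a 0)⁻¹ * (2 * (1/2 : ℝ) ^ (m + 1))) := by
          rw [← ENNReal.ofReal_mul (by positivity), ← ENNReal.ofReal_add (by positivity)
            (by positivity)]
  rw [hint]
  calc (∫⁻ g, F g ∂μ).toReal
      ≤ ((1/2 : ℝ) ^ m) ^ 2 + (a 0)⁻¹ * (2 * (1/2 : ℝ) ^ (m + 1)) :=
        ENNReal.toReal_le_of_le_ofReal (by positivity) hmain
    _ < ε ^ 2 := hm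

end Evan
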